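/- For any finite simple graph G and any positive integer k, the number of convex colorings of the disjoint union G ⊔ K₁ with at most k colors equals k times the number of convex colorings of G with at most k−1 colors. -/

import Mathlib

/-- The number of convex colorings of `G` with at most `k` colors: colorings where
every color class induces a connected subgraph (the empty subgraph counting as
connected, i.e. we use preconnectedness of induced subgraphs). -/
noncomputable def convexCount {V : Type*} (G : SimpleGraph V) (k : ℕ) : ℕ :=
  Nat.card {f : V → Fin k // ∀ c, (G.induce (f ⁻¹' {c})).Preconnected}

/-- The disjoint union `G ⊔ K₁`: `G` together with one additional isolated vertex. -/
def addIsolated {V : Type*} (G : SimpleGraph V) : SimpleGraph (Option V) where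
  Adj a b := match a, b with
    | some u, some v => G.Adj u v
    | _, _ => False
  symm := by
    constructor
    intro a b h
    cases a <;> cases b <;> simp_all <;> exact G.adj_symm h
  loopless := by
    constructor
    intro a h
    cases a <;> simp_all

section Aux

variable {V : Type*} {G : SimpleGraph V} {n : ℕ}

lemma addIsolated_adj_none_left (x : Option V) : ¬ (addIsolated G).Adj none x := by
  cases x <;> exact fun h => h

/-- An induced subgraph on a set of `some`s is isomorphic to the corresponding induced
subgraph of `G`. -/
def someIso (S : Set (Option V)) (h : (none : Option V) ∉ S) :
    G.induce (some ⁻¹' S) ≃g (addIsolated G).induce S where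
  toFun := fun x => ⟨some x.1, x.2⟩
  invFun := fun x => match x with
    | ⟨some v, hv⟩ => ⟨v, hv⟩
    | ⟨none, hv⟩ => absurd hv h
  left_inv := fun _ => rfl
  right_inv := fun x => match x with
    | ⟨some v, hv⟩ => rfl
    | ⟨none, hv⟩ => absurd hv h
  map_rel_iff' := Iff.rfl

lemma eq_of_reachable_none {S : Set (Option V)} {a b : S}
    (hr : ((addIsolated G).induce S).Reachable a b) (ha : (a : Option V) = none) :
    a = b := by
  obtain ⟨w⟩ := hr
  cases w with
  | nil => rfl
  | cons hadj _ =>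
    exfalso
    have h2 : (addIsolated G).Adj (a : Option V) _ := hadj
    rw [ha] at h2
    exact addIsolated_adj_none_left _ h2

lemma hne_aux (f : Option V → Fin (n + 1))
    (hf : ∀ c, ((addIsolated G).induce (f ⁻¹' {c})).Preconnected) (v : V) :
    f (some v) ≠ f none := by
  intro hv
  have hmem : (some v : Option V) ∈ f ⁻¹' {f none} := hv
  have hmem' : (none : Option V) ∈ f ⁻¹' {f none} := rfl
  have := eq_of_reachable_none (hf (f none) ⟨none, hmem'⟩ ⟨some v, hmem⟩) rfl
  exact Option.some_ne_none _ (congrArg Subtype.val this).symm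

lemma isSome_aux (f : Option V → Fin (n + 1))
    (hf : ∀ c, ((addIsolated G).induce (f ⁻¹' {c})).Preconnected) (v : V) :
    ((finSuccEquiv' (f none)) (f (some v))).isSome := by
  rw [Option.isSome_iff_ne_none]
  intro h
  exact hne_aux f hf v ((finSuccEquiv' (f none)).injective (h.trans (finSuccEquiv'_at _).symm))

/-- The coloring of `V` extracted from a convex coloring of `Option V`. -/
noncomputable def gfun (f : Option V → Fin (n + 1))
    (hf : ∀ c, ((addIsolated G).induce (f ⁻¹' {c})).Preconnected) : V → Fin n :=
  fun v => ((finSuccEquiv' (f none)) (f (some v))).get (isSome_aux f hf v)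

lemma gfun_spec (f : Option V → Fin (n + 1))
    (hf : ∀ c, ((addIsolated G).induce (f ⁻¹' {c})).Preconnected) (v : V) :
    (finSuccEquiv' (f none)) (f (some v)) = some (gfun (G := G) f hf v) :=
  (Option.some_get _).symm

/-- The coloring of `Option V` built from a color and a coloring of `V`. -/
def ffun (c : Fin (n + 1)) (g : V → Fin n) : Option V → Fin (n + 1) :=
  fun x => match x with
    | none => c
    | some v => (finSuccEquiv' c).symm (some (g v))

lemma gfun_convex (f : Option V → Fin (n + 1))
    (hf : ∀ c, ((addIsolated G).induce (f ⁻¹' {c})).Preconnected) (d : Fin n) :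
    (G.induce ((gfun (G := G) f hf) ⁻¹' {d})).Preconnected := by
  have hset : (gfun (G := G) f hf) ⁻¹' {d}
      = some ⁻¹' (f ⁻¹' {(finSuccEquiv' (f none)).symm (some d)}) := by
    ext v
    simp only [Set.mem_preimage, Set.mem_singleton_iff]
    constructor
    · intro h
      have h2 : (finSuccEquiv' (f none)) (f (some v)) = some d := by
        rw [gfun_spec (G := G) f hf v, h]
      exact (Equiv.eq_symm_apply _).2 h2
    · intro h
      have h2 : (finSuccEquiv' (f none)) (f (some v)) = some d :=
        (Equiv.eq_symm_apply _).1 h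
      have := (gfun_spec (G := G) f hf v).symm.trans h2
      exact Option.some_injective _ this
  rw [hset]
  have hnone : (none : Option V) ∉ f ⁻¹' {(finSuccEquiv' (f none)).symm (some d)} := by
    intro h
    have h2 : (finSuccEquiv' (f none)) (f none) = some d :=
      (Equiv.eq_symm_apply _).1 (Set.mem_singleton_iff.1 h)
    rw [finSuccEquiv'_at] at h2
    exact Option.some_ne_none _ h2.symm
  exact ((someIso _ hnone).preconnected_iff).2 (hf _)

lemma ffun_convex (c : Fin (n + 1)) (g : V → Fin n)
    (hg : ∀ d, (G.induce (g ⁻¹' {d})).Preconnected) (c' : Fin (n + 1)) :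
    ((addIsolated G).induce ((ffun c g) ⁻¹' {c'})).Preconnected := by
  by_cases h : c' = c
  · subst h
    intro a b
    have hall : ∀ x : ((ffun c' g) ⁻¹' {c'} : Set (Option V)), (x : Option V) = none := by
      rintro ⟨x, hx⟩
      cases x with
      | none => rfl
      | some v =>
        exfalso
        have h2 : (finSuccEquiv' c').symm (some (g v)) = c' := hx
        have h3 := (Equiv.symm_apply_eq _).1 h2
        rw [finSuccEquiv'_at] at h3
        exact Option.some_ne_none _ h3
    have hab : a = b := Subtype.ext ((hall a).trans (hall b).symm)
    exact hab ▸ SimpleGraph.Reachable.refl a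
  · have hc' : (finSuccEquiv' c) c' ≠ none := by
      intro hnil
      exact h ((finSuccEquiv' c).injective (hnil.trans (finSuccEquiv'_at c).symm))
    obtain ⟨d, hd⟩ := Option.ne_none_iff_exists'.1 hc'
    have hnone : (none : Option V) ∉ (ffun c g) ⁻¹' {c'} := fun hx => h hx.symm
    have hset : some ⁻¹' ((ffun c g) ⁻¹' {c'}) = g ⁻¹' {d} := by
      ext v
      simp only [Set.mem_preimage, Set.mem_singleton_iff]
      constructor
      · intro hx
        have h2 : (finSuccEquiv' c) c' = some (g v) :=
          ((Equiv.symm_apply_eq _).1 (hx : (finSuccEquiv' c).symm (some (g v)) = c')).symm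
        exact Option.some_injective _ (h2.symm.trans hd)
      · intro hx
        show (finSuccEquiv' c).symm (some (g v)) = c'
        rw [hx, ← hd, Equiv.symm_apply_apply]
    have hpre : (G.induce (some ⁻¹' ((ffun c g) ⁻¹' {c'}))).Preconnected := by
      rw [hset]; exact hg d
    exact ((someIso _ hnone).preconnected_iff).1 hpre

/-- The key equivalence. -/
noncomputable def keyEquiv (G : SimpleGraph V) (n : ℕ) :
    {f : Option V → Fin (n + 1) // ∀ c, ((addIsolated G).induce (f ⁻¹' {c})).Preconnected} ≃
      Fin (n + 1) × {g : V → Fin n // ∀ d, (G.induce (g ⁻¹' {d})).Preconnected} where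
  toFun f := ⟨f.1 none, gfun f.1 f.2, gfun_convex f.1 f.2⟩
  invFun p := ⟨ffun p.1 p.2.1, ffun_convex p.1 p.2.1 p.2.2⟩
  left_inv := by
    rintro ⟨f, hf⟩
    apply Subtype.ext
    funext x
    cases x with
    | none => rfl
    | some v =>
      show (finSuccEquiv' (f none)).symm (some (gfun (G := G) f hf v)) = f (some v)
      rw [← gfun_spec (G := G) f hf v, Equiv.symm_apply_apply]
  right_inv := by
    rintro ⟨c, g, hg⟩
    refine Prod.ext rfl (Subtype.ext (funext fun v => ?_))
    show gfun (G := G) (ffun c g) (ffun_convex c g hg) v = g v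
    apply Option.some_injective
    rw [← gfun_spec (G := G) (ffun c g) (ffun_convex c g hg) v]
    show (finSuccEquiv' c) ((finSuccEquiv' c).symm (some (g v))) = some (g v)
    rw [Equiv.apply_symm_apply]

end Aux

/-- `χ_convex(G ⊔ K₁; k) = k · χ_convex(G; k−1)`. -/
theorem convexCount_addIsolated {V : Type*} [Fintype V] (G : SimpleGraph V)
    (k : ℕ) (hk : 1 ≤ k) :
    convexCount (addIsolated G) k = k * convexCount G (k - 1) := by
  obtain ⟨n, rfl⟩ : ∃ n, k = n + 1 := ⟨k - 1, (Nat.succ_pred_eq_of_pos hk).symm⟩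
  show convexCount (addIsolated G) (n + 1) = (n + 1) * convexCount G n
  unfold convexCount
  rw [Nat.card_congr (keyEquiv G n), Nat.card_prod, Nat.card_eq_fintype_card, Fintype.card_fin]
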